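/- Let G be a finitely generated free abelian group and let g, h ∈ G be such that the subgroup ⟨g, h⟩ has rank 2. Then (1 + g) and (1 + h), as well as (1 + g) and (1 − h), are relatively prime in ℤ[G]. -/

import Mathlib

open Finsupp

section Aux

variable {G : Type} [CommGroup G]

theorem veering_coeff_ne {d : MonoidAlgebra ℤ G} (hd : d ≠ 0) : d.coeff ≠ 0 :=
  fun h => hd (MonoidAlgebra.coeff_eq_zero.1 h)

/-- The top slice of a product: if `d u ≠ 0` in `ℤ[G]` and `F : G → ℚ` is additive, then
the product `d * u` has an element of its support with `F`-value the sum of the maxima. -/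
theorem veering_slice_top [NoZeroDivisors (MonoidAlgebra ℤ G)]
    (F : G → ℚ) (hF : ∀ a b : G, F (a * b) = F a + F b)
    {d u : MonoidAlgebra ℤ G} (hd : d ≠ 0) (hu : u ≠ 0) :
    ∃ x ∈ (d * u).coeff.support,
      F x = d.coeff.support.sup' (Finsupp.support_nonempty_iff.2 (veering_coeff_ne hd)) F
          + u.coeff.support.sup' (Finsupp.support_nonempty_iff.2 (veering_coeff_ne hu)) F := by
  classical
  set Md := d.coeff.support.sup' (Finsupp.support_nonempty_iff.2 (veering_coeff_ne hd)) F with hMd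
  set Mu := u.coeff.support.sup' (Finsupp.support_nonempty_iff.2 (veering_coeff_ne hu)) F with hMu
  set dt : MonoidAlgebra ℤ G := MonoidAlgebra.ofCoeff (d.coeff.filter (fun a => F a = Md)) with hdt
  set dr : MonoidAlgebra ℤ G := MonoidAlgebra.ofCoeff (d.coeff.filter (fun a => ¬ F a = Md)) with hdr
  set ut : MonoidAlgebra ℤ G := MonoidAlgebra.ofCoeff (u.coeff.filter (fun a => F a = Mu)) with hut
  set ur : MonoidAlgebra ℤ G := MonoidAlgebra.ofCoeff (u.coeff.filter (fun a => ¬ F a = Mu)) with hur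
  have hdsum : dt + dr = d := MonoidAlgebra.coeff_injective (Finsupp.filter_pos_add_filter_neg d.coeff _)
  have husum : ut + ur = u := MonoidAlgebra.coeff_injective (Finsupp.filter_pos_add_filter_neg u.coeff _)
  have hdt0 : dt ≠ 0 := by
    obtain ⟨a, ha, hae⟩ := Finset.exists_mem_eq_sup' (Finsupp.support_nonempty_iff.2 (veering_coeff_ne hd)) F
    intro h0
    have h1 : dt.coeff a = d.coeff a := Finsupp.filter_apply_pos _ _ hae.symm
    rw [h0] at h1
    exact (Finsupp.mem_support_iff.1 ha) h1.symm
  have hut0 : ut ≠ 0 := by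
    obtain ⟨a, ha, hae⟩ := Finset.exists_mem_eq_sup' (Finsupp.support_nonempty_iff.2 (veering_coeff_ne hu)) F
    intro h0
    have h1 : ut.coeff a = u.coeff a := Finsupp.filter_apply_pos _ _ hae.symm
    rw [h0] at h1
    exact (Finsupp.mem_support_iff.1 ha) h1.symm
  have htt : dt * ut ≠ 0 := mul_ne_zero hdt0 hut0
  obtain ⟨x, hx⟩ := Finsupp.support_nonempty_iff.2 (veering_coeff_ne htt)
  have hmemdt : ∀ a ∈ dt.coeff.support, a ∈ d.coeff.support ∧ F a = Md := by
    intro a ha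
    rw [hdt, MonoidAlgebra.coeff_ofCoeff, Finsupp.support_filter, Finset.mem_filter] at ha
    exact ha
  have hmemdr : ∀ a ∈ dr.coeff.support, a ∈ d.coeff.support ∧ F a < Md := by
    intro a ha
    rw [hdr, MonoidAlgebra.coeff_ofCoeff, Finsupp.support_filter, Finset.mem_filter] at ha
    exact ⟨ha.1, lt_of_le_of_ne (Finset.le_sup' F ha.1) ha.2⟩
  have hmemut : ∀ a ∈ ut.coeff.support, a ∈ u.coeff.support ∧ F a = Mu := by
    intro a ha
    rw [hut, MonoidAlgebra.coeff_ofCoeff, Finsupp.support_filter, Finset.mem_filter] at ha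
    exact ha
  have hmemur : ∀ a ∈ ur.coeff.support, a ∈ u.coeff.support ∧ F a < Mu := by
    intro a ha
    rw [hur, MonoidAlgebra.coeff_ofCoeff, Finsupp.support_filter, Finset.mem_filter] at ha
    exact ⟨ha.1, lt_of_le_of_ne (Finset.le_sup' F ha.1) ha.2⟩
  have hxF : F x = Md + Mu := by
    have hmul := MonoidAlgebra.support_coeff_mul_subset dt ut hx
    rw [Finset.mem_mul] at hmul
    obtain ⟨a, ha, c, hc, rfl⟩ := hmul
    rw [hF, (hmemdt a ha).2, (hmemut c hc).2]
  have hcoef : (d * u).coeff x = (dt * ut).coeff x := by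
    have hsplit : d * u = dt * ut + (dt * ur + dr * ut + dr * ur) := by
      rw [← hdsum, ← husum]; ring
    have z1 : (dt * ur).coeff x = 0 := by
      rw [← Finsupp.notMem_support_iff]
      intro hc
      have hmul := MonoidAlgebra.support_coeff_mul_subset dt ur hc
      rw [Finset.mem_mul] at hmul
      obtain ⟨a, ha, c, hcc, rfl⟩ := hmul
      have := (hmemdt a ha).2
      have := (hmemur c hcc).2
      rw [hF] at hxF
      linarith
    have z2 : (dr * ut).coeff x = 0 := by
      rw [← Finsupp.notMem_support_iff]
      intro hc
      have hmul := MonoidAlgebra.support_coeff_mul_subset dr ut hc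
      rw [Finset.mem_mul] at hmul
      obtain ⟨a, ha, c, hcc, rfl⟩ := hmul
      have := (hmemdr a ha).2
      have := (hmemut c hcc).2
      rw [hF] at hxF
      linarith
    have z3 : (dr * ur).coeff x = 0 := by
      rw [← Finsupp.notMem_support_iff]
      intro hc
      have hmul := MonoidAlgebra.support_coeff_mul_subset dr ur hc
      rw [Finset.mem_mul] at hmul
      obtain ⟨a, ha, c, hcc, rfl⟩ := hmul
      have := (hmemdr a ha).2
      have := (hmemur c hcc).2
      rw [hF] at hxF
      linarith
    simp only [hsplit, MonoidAlgebra.coeff_add, Finsupp.add_apply, z1, z2, z3, add_zero]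
  refine ⟨x, ?_, hxF⟩
  rw [Finsupp.mem_support_iff, hcoef]
  exact Finsupp.mem_support_iff.1 hx

/-- If `d * u = v` with `v ≠ 0` and `F` vanishes on the support of `v`, then the additive
map `F` is constant on the support of `d`. -/
theorem veering_F_const [NoZeroDivisors (MonoidAlgebra ℤ G)]
    (F : G → ℚ) (hF : ∀ a b : G, F (a * b) = F a + F b)
    {d u v : MonoidAlgebra ℤ G} (hduv : d * u = v) (hv : v ≠ 0)
    (hvF : ∀ x ∈ v.coeff.support, F x = 0) :
    ∀ a ∈ d.coeff.support, ∀ b ∈ d.coeff.support, F a = F b := by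
  have hd : d ≠ 0 := by rintro rfl; rw [zero_mul] at hduv; exact hv hduv.symm
  have hu : u ≠ 0 := by rintro rfl; rw [mul_zero] at hduv; exact hv hduv.symm
  obtain ⟨x, hx, hxF⟩ := veering_slice_top F hF hd hu
  obtain ⟨y, hy, hyF⟩ :=
    veering_slice_top (fun a => -F a)
      (by intro a b; show -F (a * b) = -F a + -F b; rw [hF]; ring) hd hu
  rw [hduv] at hx hy
  have h1 : d.coeff.support.sup' (Finsupp.support_nonempty_iff.2 (veering_coeff_ne hd)) F
      + u.coeff.support.sup' (Finsupp.support_nonempty_iff.2 (veering_coeff_ne hu)) F = 0 := by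
    rw [← hxF]; exact hvF x hx
  have h2 : d.coeff.support.sup' (Finsupp.support_nonempty_iff.2 (veering_coeff_ne hd)) (fun a => -F a)
      + u.coeff.support.sup' (Finsupp.support_nonempty_iff.2 (veering_coeff_ne hu)) (fun a => -F a) = 0 := by
    rw [← hyF]; simp [hvF y hy]
  intro a ha b hb
  obtain ⟨c, hc⟩ := Finsupp.support_nonempty_iff.2 (veering_coeff_ne hu)
  have hc1 : F c ≤ u.coeff.support.sup' (Finsupp.support_nonempty_iff.2 (veering_coeff_ne hu)) F :=
    Finset.le_sup' F hc
  have hc2 : -F c ≤ u.coeff.support.sup' (Finsupp.support_nonempty_iff.2 (veering_coeff_ne hu)) (fun a => -F a) :=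
    Finset.le_sup' (fun a => -F a) hc
  have ha1 : F a ≤ d.coeff.support.sup' (Finsupp.support_nonempty_iff.2 (veering_coeff_ne hd)) F :=
    Finset.le_sup' F ha
  have ha2 : -F a ≤ d.coeff.support.sup' (Finsupp.support_nonempty_iff.2 (veering_coeff_ne hd)) (fun a => -F a) :=
    Finset.le_sup' (fun a => -F a) ha
  have hb1 : F b ≤ d.coeff.support.sup' (Finsupp.support_nonempty_iff.2 (veering_coeff_ne hd)) F :=
    Finset.le_sup' F hb
  have hb2 : -F b ≤ d.coeff.support.sup' (Finsupp.support_nonempty_iff.2 (veering_coeff_ne hd)) (fun a => -F a) :=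
    Finset.le_sup' (fun a => -F a) hb
  linarith

/-- Main auxiliary statement: common divisors of two "binomial" elements based at
independent group elements are units. -/
theorem veering_main_aux (G : Type) [CommGroup G]
    [Module.Free ℤ (Additive G)] [Module.Finite ℤ (Additive G)]
    (g h : G) (hrank : ∀ a b : ℤ, g ^ a * h ^ b = 1 → a = 0 ∧ b = 0)
    (v₁ v₂ : MonoidAlgebra ℤ G)
    (hs₁ : ∀ x ∈ v₁.coeff.support, x = 1 ∨ x = g) (h1₁ : v₁.coeff 1 = 1)
    (hs₂ : ∀ x ∈ v₂.coeff.support, x = 1 ∨ x = h) (h1₂ : v₂.coeff 1 = 1) :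
    IsRelPrime v₁ v₂ := by
  classical
  set ι := Module.Free.ChooseBasisIndex ℤ (Additive G) with hι
  let bG := Module.Free.chooseBasis ℤ (Additive G)
  let e : Additive G ≃+ (ι →₀ ℤ) := bG.repr.toAddEquiv
  haveI : UniqueProds G := by
    let e2 : G ≃* Multiplicative (ι →₀ ℤ) :=
      (MulEquiv.multiplicativeAdditive G).symm.trans (AddEquiv.toMultiplicative e)
    exact UniqueProds.of_injective_mulHom e2.toMonoidHom.toMulHom e2.injective inferInstance
  haveI : NoZeroDivisors (MonoidAlgebra ℤ G) := inferInstance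
  -- the embedding into a ℚ-vector space
  let J : Additive G →+ (ι →₀ ℚ) :=
    (Finsupp.mapRange.addMonoidHom (Int.castAddHom ℚ)).comp e.toAddMonoidHom
  have hJ : ∀ x : Additive G, J x = Finsupp.mapRange (Int.cast) (by simp) (e x) := by
    intro x; rfl
  have hJinj : Function.Injective J := by
    intro x y hxy
    apply e.injective
    ext i
    have : ((e x) i : ℚ) = ((e y) i : ℚ) := by
      have := congrArg (fun z => z i) hxy
      simpa [hJ] using this
    exact_mod_cast this
  -- linear independence of J g and J h over ℚ
  have hind : ∀ q r : ℚ, q • J (Additive.ofMul g) = r • J (Additive.ofMul h) →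
      q = 0 ∧ r = 0 := by
    intro q r heq
    set m : ℤ := q.num * r.den with hm
    set n : ℤ := r.num * q.den with hn
    have hqden : ((q.den : ℚ)) ≠ 0 := by exact_mod_cast q.den_nz
    have hrden : ((r.den : ℚ)) ≠ 0 := by exact_mod_cast r.den_nz
    have hmq : (m : ℚ) = (q.den * r.den : ℚ) * q := by
      have h' : q = (q.num : ℚ) / q.den := (Rat.num_div_den q).symm
      rw [eq_div_iff hqden] at h'
      push_cast [hm]
      rw [← h']; ring
    have hnq : (n : ℚ) = (q.den * r.den : ℚ) * r := by
      have h' : r = (r.num : ℚ) / r.den := (Rat.num_div_den r).symm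
      rw [eq_div_iff hrden] at h'
      push_cast [hn]
      rw [← h']; ring
    have hJeq : J (m • Additive.ofMul g) = J (n • Additive.ofMul h) := by
      rw [map_zsmul, map_zsmul, ← Int.cast_smul_eq_zsmul ℚ, ← Int.cast_smul_eq_zsmul ℚ,
        hmq, hnq]
      simp only [mul_smul]
      rw [heq]
    have hgm : (m • Additive.ofMul g : Additive G) = n • Additive.ofMul h := hJinj hJeq
    have hgh : g ^ m * h ^ (-n) = 1 := by
      have : Additive.ofMul (g ^ m) = Additive.ofMul (h ^ n) := by
        simpa [ofMul_zpow] using hgm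
      have hpow : g ^ m = h ^ n := by exact_mod_cast Additive.ofMul.injective this
      rw [hpow, ← zpow_add]
      simp
    obtain ⟨hm0, hn0⟩ := hrank m (-n) hgh
    constructor
    · have : q.num = 0 := by
        have : q.num * (r.den : ℤ) = 0 := hm0
        rcases mul_eq_zero.1 this with h' | h'
        · exact h'
        · exact absurd h' (by exact_mod_cast r.den_nz)
      exact Rat.zero_iff_num_zero.2 this
    · have hn0' : n = 0 := by omega
      have : r.num = 0 := by
        have : r.num * (q.den : ℤ) = 0 := hn0'
        rcases mul_eq_zero.1 this with h' | h'
        · exact h'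
        · exact absurd h' (by exact_mod_cast q.den_nz)
      exact Rat.zero_iff_num_zero.2 this
  -- separation by dual functionals
  have hspan : ∀ (w : G) (x : Additive G),
      (∀ f : Additive G →+ ℚ, f (Additive.ofMul w) = 0 → f x = 0) →
      ∃ q : ℚ, J x = q • J (Additive.ofMul w) := by
    intro w x hx
    by_contra hq
    push_neg at hq
    have hmem : J x ∉ Submodule.span ℚ {J (Additive.ofMul w)} := by
      intro hmm
      rw [Submodule.mem_span_singleton] at hmm
      obtain ⟨q, hq'⟩ := hmm
      exact hq q hq'.symm
    set W := Submodule.span ℚ {J (Additive.ofMul w)} with hW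
    have hq0 : W.mkQ (J x) ≠ 0 := by
      rw [Submodule.mkQ_apply, Ne, Submodule.Quotient.mk_eq_zero]
      exact hmem
    have hnall : ¬ (∀ φ : Module.Dual ℚ ((ι →₀ ℚ) ⧸ W), φ (W.mkQ (J x)) = 0) := by
      rw [Module.forall_dual_apply_eq_zero_iff ℚ]
      exact hq0
    push_neg at hnall
    obtain ⟨φ, hφ⟩ := hnall
    let f : Additive G →+ ℚ := ((φ.comp W.mkQ).toAddMonoidHom).comp J
    have hfw : f (Additive.ofMul w) = 0 := by
      have : W.mkQ (J (Additive.ofMul w)) = 0 := by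
        rw [Submodule.mkQ_apply, Submodule.Quotient.mk_eq_zero]
        exact Submodule.mem_span_singleton_self _
      simp [f, this]
    exact hφ (hx f hfw)
  -- basic nonvanishing facts
  have hv₁0 : v₁ ≠ 0 := by
    intro h0; rw [h0] at h1₁; simp at h1₁
  have hv₂0 : v₂ ≠ 0 := by
    intro h0; rw [h0] at h1₂; simp at h1₂
  -- the actual relative primality
  intro d hd1 hd2
  obtain ⟨u₁, hu₁⟩ := hd1
  obtain ⟨u₂, hu₂⟩ := hd2
  have hd0 : d ≠ 0 := by
    rintro rfl; rw [zero_mul] at hu₁; exact hv₁0 hu₁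
  -- every admissible functional is constant on the support of d
  have hconst : ∀ (w : G) (vv : MonoidAlgebra ℤ G), vv ≠ 0 → (∀ x ∈ vv.coeff.support, x = 1 ∨ x = w) →
      (∃ uu, vv = d * uu) → ∀ f : Additive G →+ ℚ, f (Additive.ofMul w) = 0 →
      ∀ a ∈ d.coeff.support, ∀ b ∈ d.coeff.support,
        f (Additive.ofMul a) = f (Additive.ofMul b) := by
    intro w vv hvv hsv ⟨uu, huu⟩ f hfw a ha b hb
    refine veering_F_const (fun c => f (Additive.ofMul c)) ?_ huu.symm hvv ?_ a ha b hb
    · intro a' b'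
      show f (Additive.ofMul (a' * b')) = f (Additive.ofMul a') + f (Additive.ofMul b')
      rw [ofMul_mul, map_add]
    · intro x hxs
      rcases hsv x hxs with h' | h'
      · show f (Additive.ofMul x) = 0
        rw [h']; simpa using map_zero f
      · show f (Additive.ofMul x) = 0
        rw [h']; exact hfw
  have hsingle : ∀ a ∈ d.coeff.support, ∀ b ∈ d.coeff.support, a = b := by
    intro a ha b hb
    set x : Additive G := Additive.ofMul a - Additive.ofMul b with hx
    have hxg : ∀ f : Additive G →+ ℚ, f (Additive.ofMul g) = 0 → f x = 0 := by
      intro f hf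
      have := hconst g v₁ hv₁0 hs₁ ⟨u₁, hu₁⟩ f hf a ha b hb
      rw [hx, map_sub, this, sub_self]
    have hxh : ∀ f : Additive G →+ ℚ, f (Additive.ofMul h) = 0 → f x = 0 := by
      intro f hf
      have := hconst h v₂ hv₂0 hs₂ ⟨u₂, hu₂⟩ f hf a ha b hb
      rw [hx, map_sub, this, sub_self]
    obtain ⟨q, hq⟩ := hspan g x hxg
    obtain ⟨r, hr⟩ := hspan h x hxh
    obtain ⟨hq0, hr0⟩ := hind q r (hq.symm.trans hr)
    have hJx : J x = 0 := by rw [hq, hq0, zero_smul]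
    have hx0 : x = 0 := hJinj (by simpa using hJx)
    have : Additive.ofMul a = Additive.ofMul b := sub_eq_zero.1 hx0
    exact Additive.ofMul.injective this
  obtain ⟨a₀, ha₀⟩ := Finsupp.support_nonempty_iff.2 (veering_coeff_ne hd0)
  have hda : d.coeff = Finsupp.single a₀ (d.coeff a₀) := by
    rw [Finsupp.eq_single_iff]
    refine ⟨fun c hc => ?_, rfl⟩
    rw [Finset.mem_singleton]
    exact hsingle c hc a₀ ha₀
  have hda' : d = MonoidAlgebra.single a₀ (d.coeff a₀) := MonoidAlgebra.coeff_injective hda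
  have hcu : d.coeff a₀ * u₁.coeff (a₀⁻¹ * 1) = 1 := by
    have hv : (MonoidAlgebra.single a₀ (d.coeff a₀) * u₁).coeff 1 = v₁.coeff 1 := by
      rw [← hda', ← hu₁]
    rw [MonoidAlgebra.coeff_single_mul_apply, h1₁] at hv
    exact hv
  have hu2 : u₁.coeff (a₀⁻¹ * 1) * d.coeff a₀ = 1 := by rw [mul_comm]; exact hcu
  refine isUnit_iff_exists.2 ⟨MonoidAlgebra.single a₀⁻¹ (u₁.coeff (a₀⁻¹ * 1)), ?_, ?_⟩
  · rw [hda']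
    have := MonoidAlgebra.single_mul_single (R := ℤ) (m₁ := a₀) (m₂ := a₀⁻¹)
      (r₁ := d.coeff a₀) (r₂ := u₁.coeff (a₀⁻¹ * 1))
    rw [this, mul_inv_cancel, hcu, MonoidAlgebra.one_def]
  · rw [hda']
    have := MonoidAlgebra.single_mul_single (R := ℤ) (m₁ := a₀⁻¹) (m₂ := a₀)
      (r₁ := u₁.coeff (a₀⁻¹ * 1)) (r₂ := d.coeff a₀)
    rw [this, inv_mul_cancel, hu2, MonoidAlgebra.one_def]

end Aux

/-- If `g, h` generate a rank-2 subgroup of a finitely generated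
free abelian group `G`, then `1 + g` and `1 + h`, as well as `1 + g` and `1 - h`,
are relatively prime in `ℤ[G]`. -/
theorem veering_relprime_one_add
    (G : Type) [CommGroup G]
    [Module.Free ℤ (Additive G)] [Module.Finite ℤ (Additive G)]
    (g h : G) (hrank : ∀ a b : ℤ, g ^ a * h ^ b = 1 → a = 0 ∧ b = 0) :
    IsRelPrime ((1 : MonoidAlgebra ℤ G) + MonoidAlgebra.of ℤ G g)
      ((1 : MonoidAlgebra ℤ G) + MonoidAlgebra.of ℤ G h) ∧
    IsRelPrime ((1 : MonoidAlgebra ℤ G) + MonoidAlgebra.of ℤ G g)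
      ((1 : MonoidAlgebra ℤ G) - MonoidAlgebra.of ℤ G h) := by
  classical
  have hg1 : g ≠ 1 := by
    intro hgg
    have := hrank 1 0 (by rw [hgg]; simp)
    simpa using this.1
  have hh1 : h ≠ 1 := by
    intro hgg
    have := hrank 0 1 (by rw [hgg]; simp)
    simpa using this.2
  have hsupp_add : ∀ w : G, ∀ x ∈ ((1 : MonoidAlgebra ℤ G) + MonoidAlgebra.of ℤ G w).coeff.support,
      x = 1 ∨ x = w := by
    intro w x hx
    by_contra hc
    push_neg at hc
    rw [Finsupp.mem_support_iff, MonoidAlgebra.coeff_add, Finsupp.add_apply, MonoidAlgebra.one_def,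
      MonoidAlgebra.of_apply, MonoidAlgebra.coeff_single, MonoidAlgebra.coeff_single,
      Finsupp.single_apply, Finsupp.single_apply] at hx
    simp [Ne.symm hc.1, Ne.symm hc.2] at hx
  have hsupp_sub : ∀ x ∈ ((1 : MonoidAlgebra ℤ G) - MonoidAlgebra.of ℤ G h).coeff.support,
      x = 1 ∨ x = h := by
    intro x hx
    by_contra hc
    push_neg at hc
    rw [Finsupp.mem_support_iff, MonoidAlgebra.coeff_sub, Finsupp.sub_apply, MonoidAlgebra.one_def,
      MonoidAlgebra.of_apply, MonoidAlgebra.coeff_single, MonoidAlgebra.coeff_single,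
      Finsupp.single_apply, Finsupp.single_apply] at hx
    simp [Ne.symm hc.1, Ne.symm hc.2] at hx
  have happly : ∀ w : G, w ≠ 1 → ((1 : MonoidAlgebra ℤ G) + MonoidAlgebra.of ℤ G w).coeff 1 = 1 := by
    intro w hw
    rw [MonoidAlgebra.coeff_add, Finsupp.add_apply, MonoidAlgebra.one_def, MonoidAlgebra.of_apply,
      MonoidAlgebra.coeff_single, MonoidAlgebra.coeff_single]
    rw [Finsupp.single_apply, Finsupp.single_apply]
    simp [hw]
  have happly' : ((1 : MonoidAlgebra ℤ G) - MonoidAlgebra.of ℤ G h).coeff 1 = 1 := by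
    rw [MonoidAlgebra.coeff_sub, Finsupp.sub_apply, MonoidAlgebra.one_def, MonoidAlgebra.of_apply,
      MonoidAlgebra.coeff_single, MonoidAlgebra.coeff_single]
    rw [Finsupp.single_apply, Finsupp.single_apply]
    simp [hh1]
  constructor
  · exact veering_main_aux G g h hrank _ _ (hsupp_add g) (happly g hg1)
      (hsupp_add h) (happly h hh1)
  · exact veering_main_aux G g h hrank _ _ (hsupp_add g) (happly g hg1)
      hsupp_sub happly'
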